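/- Let V be a finite-dimensional complex vector space and let f : V → V be a ℂ-linear endomorphism with characteristic polynomial Q ∈ ℂ[X]. Regard V as a finite-dimensional real vector space by restriction of scalars and f as an ℝ-linear endomorphism; let P ∈ ℝ[X] be its characteristic polynomial. Then the image of P under the coefficientwise inclusion ℝ[X] → ℂ[X] equals Q · Q̄, where Q̄ ∈ ℂ[X] is obtained from Q by applying complex conjugation to each coefficient. -/

import Mathlib

open Polynomial

section Aux

variable (V : Type*) [AddCommGroup V] [Module ℂ V]

/-- The conjugate complex vector space: same underlying group, scalar action twisted by
complex conjugation. -/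
def CConjAux : Type _ := V

instance : AddCommGroup (CConjAux V) := inferInstanceAs (AddCommGroup V)
instance : Module ℂ (CConjAux V) := Module.compHom V (starRingEnd ℂ)

/-- Identity map into the conjugate space. -/
def CConjAux.mk : V → CConjAux V := id

/-- Identity map out of the conjugate space. -/
def CConjAux.down : CConjAux V → V := id

variable {V}

lemma cconjAux_smul (z : ℂ) (v : CConjAux V) :
    z • v = CConjAux.mk V ((starRingEnd ℂ) z • CConjAux.down V v) := rfl

/-- The conjugate of a linear endomorphism. -/
def conjMapAux (f : V →ₗ[ℂ] V) : CConjAux V →ₗ[ℂ] CConjAux V where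
  toFun v := CConjAux.mk V (f (CConjAux.down V v))
  map_add' x y := congrArg (CConjAux.mk V) (f.map_add _ _)
  map_smul' z v := congrArg (CConjAux.mk V) (f.map_smul ((starRingEnd ℂ) z) (CConjAux.down V v))

@[simp] lemma conjMapAux_apply (f : V →ₗ[ℂ] V) (v : V) :
    conjMapAux f (CConjAux.mk V v) = CConjAux.mk V (f v) := rfl

private lemma mapRange_conj_conj {ι : Type*} (l : ι →₀ ℂ) :
    ((l.mapRange (starRingEnd ℂ) (map_zero _)).mapRange (starRingEnd ℂ) (map_zero _)) = l := by
  ext i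
  simp [Finsupp.mapRange_apply]

/-- The conjugate basis. -/
noncomputable def conjBasisAux {ι : Type*} (b : Module.Basis ι ℂ V) : Module.Basis ι ℂ (CConjAux V) :=
  .ofRepr
    { toFun := fun v => ((b.repr (CConjAux.down V v)).mapRange (starRingEnd ℂ) (map_zero _))
      invFun := fun l => CConjAux.mk V
        (b.repr.symm (l.mapRange (starRingEnd ℂ) (map_zero _)))
      map_add' := fun x y => by
        show ((b.repr (CConjAux.down V x + CConjAux.down V y)).mapRange
          (starRingEnd ℂ) (map_zero _)) = _
        ext i
        simp [Finsupp.mapRange_apply]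
      map_smul' := fun z v => by
        show ((b.repr ((starRingEnd ℂ) z • CConjAux.down V v)).mapRange
          (starRingEnd ℂ) (map_zero _)) = _
        ext i
        simp [Finsupp.mapRange_apply]
      left_inv := fun v => by
        show CConjAux.mk V (b.repr.symm _) = v
        rw [mapRange_conj_conj, b.repr.symm_apply_apply]
        rfl
      right_inv := fun l => by
        show ((b.repr (CConjAux.down V (CConjAux.mk V (b.repr.symm _)))).mapRange
          (starRingEnd ℂ) (map_zero _)) = l
        show ((b.repr (b.repr.symm _)).mapRange (starRingEnd ℂ) (map_zero _)) = l
        rw [b.repr.apply_symm_apply, mapRange_conj_conj] }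

@[simp] lemma conjBasisAux_repr_apply {ι : Type*} (b : Module.Basis ι ℂ V) (v : V) (i : ι) :
    (conjBasisAux b).repr (CConjAux.mk V v) i = (starRingEnd ℂ) (b.repr v i) := rfl

lemma conjBasisAux_apply {ι : Type*} (b : Module.Basis ι ℂ V) (j : ι) :
    conjBasisAux b j = CConjAux.mk V (b j) := by
  apply (conjBasisAux b).repr.injective
  rw [Module.Basis.repr_self]
  ext i
  rw [conjBasisAux_repr_apply, Module.Basis.repr_self]
  rcases eq_or_ne i j with h | h
  · subst h; simp
  · simp [Finsupp.single_apply, h, (Ne.symm h)]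

end Aux

section Charpoly

variable {V : Type*} [AddCommGroup V] [Module ℂ V] [FiniteDimensional ℂ V]

instance : FiniteDimensional ℂ (CConjAux V) :=
  Module.Finite.of_basis (conjBasisAux (Module.finBasis ℂ V))

lemma charpoly_conjMapAux (f : V →ₗ[ℂ] V) :
    (conjMapAux f).charpoly = f.charpoly.map (starRingEnd ℂ) := by
  let b := Module.finBasis ℂ V
  rw [← f.charpoly_toMatrix b, ← (conjMapAux f).charpoly_toMatrix (conjBasisAux b),
    ← Matrix.charpoly_map]
  congr 1
  ext i j
  rw [LinearMap.toMatrix_apply, Matrix.map_apply, LinearMap.toMatrix_apply,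
    conjBasisAux_apply, conjMapAux_apply, conjBasisAux_repr_apply]

end Charpoly

section Equiv

open Module TensorProduct

variable {V : Type*} [AddCommGroup V] [Module ℂ V]

/-- The real-linear diagonal map `V → V × conj V`. -/
def psiAux : V →ₗ[ℝ] V × CConjAux V where
  toFun v := (v, CConjAux.mk V v)
  map_add' x y := rfl
  map_smul' r v := by
    refine Prod.ext rfl ?_
    show CConjAux.mk V ((algebraMap ℝ ℂ r) • v) =
      CConjAux.mk V ((starRingEnd ℂ) (algebraMap ℝ ℂ r) • v)
    congr 1
    rw [Complex.coe_algebraMap, Complex.conj_ofReal]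

/-- The canonical `ℂ`-linear map `ℂ ⊗[ℝ] V → V × conj V`. -/
noncomputable def eAux : ℂ ⊗[ℝ] V →ₗ[ℂ] V × CConjAux V :=
  TensorProduct.AlgebraTensorModule.lift
    (LinearMap.toSpanSingleton ℂ (V →ₗ[ℝ] V × CConjAux V) psiAux)

lemma eAux_tmul (z : ℂ) (v : V) :
    eAux (z ⊗ₜ[ℝ] v) = (z • v, z • CConjAux.mk V v) := by
  simp [eAux, psiAux, Prod.smul_def]
  exact ⟨rfl, rfl⟩

lemma eAux_surjective : Function.Surjective (eAux (V := V)) := by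
  rintro ⟨a, b⟩
  set d := CConjAux.down V b with hd
  refine ⟨(1 : ℂ) ⊗ₜ ((2:ℂ)⁻¹ • (a + d)) +
    Complex.I ⊗ₜ ((-(2:ℂ)⁻¹ * Complex.I) • (a - d)), ?_⟩
  have hI : Complex.I * (-(2:ℂ)⁻¹ * Complex.I) = (2:ℂ)⁻¹ := by
    rw [mul_left_comm, Complex.I_mul_I]; ring
  have hI' : (starRingEnd ℂ) Complex.I * (-(2:ℂ)⁻¹ * Complex.I) = -(2:ℂ)⁻¹ := by
    rw [Complex.conj_I, neg_mul, mul_left_comm, Complex.I_mul_I]; ring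
  rw [map_add, eAux_tmul, eAux_tmul]
  refine Prod.ext ?_ ?_
  · show (1:ℂ) • ((2:ℂ)⁻¹ • (a + d)) +
      Complex.I • ((-(2:ℂ)⁻¹ * Complex.I) • (a - d)) = a
    rw [one_smul, smul_smul, hI]
    module
  · show CConjAux.mk V ((starRingEnd ℂ) 1 • ((2:ℂ)⁻¹ • (a + d))) +
      CConjAux.mk V ((starRingEnd ℂ) Complex.I • ((-(2:ℂ)⁻¹ * Complex.I) • (a - d))) = b
    show CConjAux.mk V ((starRingEnd ℂ) 1 • ((2:ℂ)⁻¹ • (a + d)) +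
      (starRingEnd ℂ) Complex.I • ((-(2:ℂ)⁻¹ * Complex.I) • (a - d))) = b
    rw [map_one, one_smul, smul_smul, hI']
    show CConjAux.mk V ((2:ℂ)⁻¹ • (a + d) + (-(2:ℂ)⁻¹) • (a - d)) = CConjAux.mk V d
    congr 1
    module

lemma finrank_cconjAux [FiniteDimensional ℂ V] :
    finrank ℂ (CConjAux V) = finrank ℂ V := by
  rw [Module.finrank_eq_card_basis (conjBasisAux (Module.finBasis ℂ V)), Fintype.card_fin]

end Equiv

open TensorProduct in
/-- The characteristic polynomial of a `ℂ`-linear endomorphism `f`, viewed as an `ℝ`-linear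
endomorphism by restriction of scalars, equals `Q * Q̄` where `Q` is the characteristic
polynomial of `f` and `Q̄` is obtained by conjugating the coefficients. -/
theorem stmt_7 (V : Type*) [AddCommGroup V] [Module ℂ V] [FiniteDimensional ℂ V]
    (f : V →ₗ[ℂ] V) :
    ((f.restrictScalars ℝ).charpoly).map (algebraMap ℝ ℂ) =
      f.charpoly * (f.charpoly).map (starRingEnd ℂ) := by
  have hrank : Module.finrank ℂ (ℂ ⊗[ℝ] V) = Module.finrank ℂ (V × CConjAux V) := by
    rw [Module.finrank_baseChange, ← Module.finrank_mul_finrank ℝ ℂ V,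
      Complex.finrank_real_complex, Module.finrank_prod, finrank_cconjAux]
    ring
  have hsurj := eAux_surjective (V := V)
  have hinj := (LinearMap.injective_iff_surjective_of_finrank_eq_finrank hrank).mpr hsurj
  let E : (ℂ ⊗[ℝ] V) ≃ₗ[ℂ] V × CConjAux V := LinearEquiv.ofBijective eAux ⟨hinj, hsurj⟩
  have key : ∀ y, eAux (((f.restrictScalars ℝ).baseChange ℂ) y) =
      (f.prodMap (conjMapAux f)) (eAux y) := by
    intro y
    induction y using TensorProduct.induction_on with
    | zero => simp [Prod.mk_zero_zero]
    | tmul z v =>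
      rw [LinearMap.baseChange_tmul, eAux_tmul, eAux_tmul, LinearMap.restrictScalars_apply,
        LinearMap.prodMap_apply]
      exact Prod.ext (f.map_smul z v).symm ((conjMapAux f).map_smul z (CConjAux.mk V v)).symm
    | add x y hx hy => simp only [map_add, hx, hy]
  have hconj : E.conj ((f.restrictScalars ℝ).baseChange ℂ) = f.prodMap (conjMapAux f) := by
    refine LinearMap.ext fun x => ?_
    have h0 : E.conj ((f.restrictScalars ℝ).baseChange ℂ) x =
        E (((f.restrictScalars ℝ).baseChange ℂ) (E.symm x)) := rfl
    have h1 : (E (((f.restrictScalars ℝ).baseChange ℂ) (E.symm x))) =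
        (f.prodMap (conjMapAux f)) (E (E.symm x)) := key (E.symm x)
    rw [h0, h1, E.apply_symm_apply]
  rw [← LinearMap.charpoly_baseChange, ← E.charpoly_conj ((f.restrictScalars ℝ).baseChange ℂ),
    hconj, LinearMap.charpoly_prodMap, charpoly_conjMapAux]
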